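/- Let G be a finite tree with boundary δG containing x, and let λ>0. A function f:V→ℝ is a λ-flow to x satisfying f(y)−f(z)>0 for every edge (y,z) with d(x,y)>d(x,z) if and only if f is a λ-flow to x with f(z)>0 for every z∈δG∖{x}. -/

import Mathlib

open Finset

attribute [local instance] Classical.propDecidable

namespace Steklov

variable {V : Type} [Fintype V] [DecidableEq V]

/-- The boundary of a graph: the set of vertices of degree one. -/
noncomputable def bdry (G : SimpleGraph V) : Finset V :=
  Finset.univ.filter (fun v => G.degree v = 1)

/-- The graph Laplacian `Δf(x) = Σ_{y∼x} (f x - f y)`. -/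
noncomputable def lap (G : SimpleGraph V) (f : V → ℝ) (x : V) : ℝ :=
  ∑ y ∈ G.neighborFinset x, (f x - f y)

/-- `f` is a Steklov eigenfunction of `G` with eigenvalue `lam`:
`f ≠ 0`, `Δf = 0` on the interior and `∂f/∂n = lam • f` on the boundary. -/
noncomputable def IsEigenpair (G : SimpleGraph V) (lam : ℝ) (f : V → ℝ) : Prop :=
  f ≠ 0 ∧ (∀ x, x ∉ bdry G → lap G f x = 0) ∧ ∀ x ∈ bdry G, lap G f x = lam * f x

/-- The first nonzero Steklov eigenvalue of `G`. -/
noncomputable def lambda2 (G : SimpleGraph V) : ℝ :=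
  sInf {lam : ℝ | 0 < lam ∧ ∃ f : V → ℝ, IsEigenpair G lam f}

/-- `f` is a `lam`-flow to `x` on `G`. -/
noncomputable def IsFlow (G : SimpleGraph V) (lam : ℝ) (x : V) (f : V → ℝ) : Prop :=
  f ≠ 0 ∧ (∀ w, w ∉ bdry G → w ≠ x → lap G f w = 0) ∧
    ∀ w ∈ bdry G, w ≠ x → lap G f w = lam * f w

/-- The Rayleigh quotient of `f` (sum over undirected edges in the numerator). -/
noncomputable def rayleigh (G : SimpleGraph V) (f : V → ℝ) : ℝ :=
  ((∑ x, ∑ y ∈ G.neighborFinset x, (f x - f y) ^ 2) / 2) / ∑ x ∈ bdry G, f x ^ 2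

/-- `Σ(G,x)`: the set of `lam ≥ 0` admitting a `lam`-flow `f` to `x` with `f x = 0`
which increases along edges pointing away from `x`. -/
def SigmaSet (G : SimpleGraph V) (x : V) : Set ℝ :=
  {lam | 0 ≤ lam ∧ ∃ f : V → ℝ, IsFlow G lam x f ∧ f x = 0 ∧
    ∀ y z : V, G.Adj y z → G.dist x z < G.dist x y → f z < f y}

/-- `Σ̂(G,x)`: the set of `lam ≥ 0` admitting a `lam`-flow `f` to `x` with `f x = 0`. -/
def SigmaHatSet (G : SimpleGraph V) (x : V) : Set ℝ :=
  {lam | 0 ≤ lam ∧ ∃ f : V → ℝ, IsFlow G lam x f ∧ f x = 0}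

/-- `σ(G,x) = inf Σ(G,x)`. -/
noncomputable def sigma (G : SimpleGraph V) (x : V) : ℝ := sInf (SigmaSet G x)

/-- `σ̂(G,x) = inf Σ̂(G,x)`. -/
noncomputable def sigmaHat (G : SimpleGraph V) (x : V) : ℝ := sInf (SigmaHatSet G x)

/-- The vertex set of the branch from `(u,v)`: the connected component of `u`
after deleting the edge between `u` and `v`. -/
def branchSet (G : SimpleGraph V) (u v : V) : Set V :=
  {w | (G.deleteEdges {s(u, v)}).Reachable u w}

/-- The vertex set of the subtree `H(u,v)` spanned by the branch from `(u,v)` together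
with `v`. -/
def branchClosed (G : SimpleGraph V) (u v : V) : Set V :=
  insert v (branchSet G u v)

/-- `σ(H(u,v), v)`, computed intrinsically in the subtree `H(u,v)`. -/
noncomputable def sigmaB (G : SimpleGraph V) (u v : V) : ℝ :=
  sigma (G.induce (branchClosed G u v)) ⟨v, Set.mem_insert _ _⟩

/-- The double `(G)²_x` of `G` at `x`: two disjoint copies of `G` with the two
copies of `x` identified. -/
def doubleAt (G : SimpleGraph V) (x : V) : SimpleGraph (V ⊕ {v : V // v ≠ x}) where
  Adj a b :=
    match a, b with
    | Sum.inl u, Sum.inl w => G.Adj u w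
    | Sum.inr u, Sum.inr w => G.Adj u.1 w.1
    | Sum.inl u, Sum.inr w => u = x ∧ G.Adj x w.1
    | Sum.inr u, Sum.inl w => w = x ∧ G.Adj x u.1
  symm := by
    refine ⟨?_⟩
    rintro (u | u) (w | w) h
    · exact h.symm
    · exact h
    · exact h
    · exact h.symm
  loopless := by
    refine ⟨?_⟩
    rintro (u | u) h
    · exact G.loopless.irrefl u h
    · exact G.loopless.irrefl u.1 h


section Aux

open SimpleGraph

variable {G : SimpleGraph V}

lemma mem_bdry_iff {w : V} : w ∈ bdry G ↔ G.degree w = 1 := by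
  simp [bdry]

lemma mem_nbr {v w : V} : w ∈ G.neighborFinset v ↔ G.Adj v w := by
  rw [SimpleGraph.mem_neighborFinset]

lemma exists_geodesic (hconn : G.Connected) (x u : V) :
    ∃ p : G.Walk x u, p.IsPath ∧ p.length = G.dist x u := by
  obtain ⟨p, hp⟩ := hconn.exists_walk_length_eq_dist x u
  refine ⟨p.bypass, p.bypass_isPath, le_antisymm ?_ (SimpleGraph.dist_le _)⟩
  calc p.bypass.length ≤ p.length := p.length_bypass_le
    _ = G.dist x u := hp

lemma not_mem_of_geodesic {x u w : V} {p : G.Walk x u}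
    (hp : p.length = G.dist x u) (hw : G.dist x u < G.dist x w) : w ∉ p.support := by
  intro h
  have h1 : G.dist x w ≤ (p.takeUntil w h).length := SimpleGraph.dist_le _
  have h2 := p.length_takeUntil_le h
  omega

lemma adj_dist_ne (hG : G.IsTree) (x : V) {u w : V} (h : G.Adj u w) :
    G.dist x u ≠ G.dist x w := by
  intro heq
  obtain ⟨p, hp, hpl⟩ := exists_geodesic hG.isConnected x u
  obtain ⟨q, hq, hql⟩ := exists_geodesic hG.isConnected x w
  have hwp : w ∉ p.support := by
    intro hmem
    have h1 : G.dist x w ≤ (p.takeUntil w hmem).length := SimpleGraph.dist_le _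
    have h2 := p.length_takeUntil_le hmem
    have h4 := congrArg SimpleGraph.Walk.length (p.take_spec hmem)
    rw [SimpleGraph.Walk.length_append] at h4
    have h5 : (p.dropUntil w hmem).length = 0 := by omega
    exact h.ne (SimpleGraph.Walk.eq_of_length_eq_zero h5).symm
  have hP1 : (p.concat h).IsPath := by
    rw [← SimpleGraph.Walk.isPath_reverse_iff, SimpleGraph.Walk.reverse_concat]
    exact hp.reverse.cons (by simpa using hwp)
  have hPeq := hG.IsAcyclic.path_unique ⟨p.concat h, hP1⟩ ⟨q, hq⟩
  have hlen : (p.concat h).length = q.length := by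
    exact congrArg (fun r : G.Path x w => r.1.length) hPeq
  rw [SimpleGraph.Walk.length_concat] at hlen
  omega

lemma tree_bridge (hG : G.IsTree) {y z : V} (h : G.Adj y z) :
    ¬ (G.deleteEdges {s(y, z)}).Reachable y z := by
  have hb := SimpleGraph.isAcyclic_iff_forall_adj_isBridge.mp hG.IsAcyclic h
  rw [SimpleGraph.isBridge_iff] at hb
  exact hb

lemma branch_crossing (hG : G.IsTree) {y z w u : V}
    (hadj : G.Adj y z)
    (hw : (G.deleteEdges {s(y, z)}).Reachable y w)
    (hu : ¬ (G.deleteEdges {s(y, z)}).Reachable y u)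
    (h : G.Adj w u) : w = y ∧ u = z := by
  by_cases he : s(w, u) = s(y, z)
  · rcases Sym2.eq_iff.mp he with ⟨rfl, rfl⟩ | ⟨rfl, rfl⟩
    · exact ⟨rfl, rfl⟩
    · exact absurd hw (tree_bridge hG hadj)
  · have hadj' : (G.deleteEdges {s(y, z)}).Adj w u := by
      rw [SimpleGraph.deleteEdges_adj]
      exact ⟨h, by simpa using he⟩
    exact absurd (hw.trans hadj'.reachable) hu

lemma x_not_in_branch (hG : G.IsTree) {x y z : V} (hadj : G.Adj y z)
    (hd : G.dist x z < G.dist x y) : ¬ (G.deleteEdges {s(y, z)}).Reachable y x := by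
  obtain ⟨p, hp, hpl⟩ := exists_geodesic hG.isConnected x z
  have hyp : y ∉ p.support := not_mem_of_geodesic hpl hd
  have hpe : ∀ e ∈ p.edges, e ∉ ({s(y, z)} : Set (Sym2 V)) := by
    intro e he hmem
    rw [Set.mem_singleton_iff] at hmem
    subst hmem
    exact hyp (p.fst_mem_support_of_mem_edges he)
  have hreach : (G.deleteEdges {s(y, z)}).Reachable x z := ⟨p.toDeleteEdges _ hpe⟩
  intro hyx
  exact tree_bridge hG hadj (hyx.trans hreach)

/-- The finset of vertices on the `y`-side of the edge `{y, z}`. -/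
noncomputable def branchFinset (G : SimpleGraph V) (y z : V) : Finset V :=
  Finset.univ.filter (fun w => (G.deleteEdges {s(y, z)}).Reachable y w)

lemma mem_branchFinset {y z w : V} :
    w ∈ branchFinset G y z ↔ (G.deleteEdges {s(y, z)}).Reachable y w := by
  simp [branchFinset]

lemma exists_boundary_in_branch (hG : G.IsTree) (hcard : 2 ≤ Fintype.card V)
    {x y z : V} (hadj : G.Adj y z) (hd : G.dist x z < G.dist x y) :
    ∃ w ∈ branchFinset G y z, w ∈ bdry G ∧ w ≠ x := by
  have hyB : y ∈ branchFinset G y z := mem_branchFinset.mpr (SimpleGraph.Reachable.refl y)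
  obtain ⟨w, hwB, hmax⟩ := Finset.exists_max_image (branchFinset G y z)
    (fun w => G.dist x w) ⟨y, hyB⟩
  have hwB' := mem_branchFinset.mp hwB
  have hwx : w ≠ x := fun hwx => x_not_in_branch hG hadj hd (hwx ▸ hwB')
  have hnb : ∀ u, G.Adj w u → G.dist x w = G.dist x u + 1 := by
    intro u hu
    by_cases huB : (G.deleteEdges {s(y, z)}).Reachable y u
    · have h1 : G.dist x u ≤ G.dist x w := hmax u (mem_branchFinset.mpr huB)
      have h2 : G.dist x u ≠ G.dist x w := adj_dist_ne hG x hu.symm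
      have h3 : G.dist x w ≤ G.dist x u + 1 := by
        calc G.dist x w ≤ G.dist x u + G.dist u w := hG.isConnected.dist_triangle
          _ = G.dist x u + 1 := by rw [SimpleGraph.dist_eq_one_iff_adj.mpr hu.symm]
      omega
    · obtain ⟨rfl, rfl⟩ := branch_crossing hG hadj hwB' huB hu
      have h3 : G.dist x w ≤ G.dist x u + 1 := by
        calc G.dist x w ≤ G.dist x u + G.dist u w := hG.isConnected.dist_triangle
          _ = G.dist x u + 1 := by rw [SimpleGraph.dist_eq_one_iff_adj.mpr hu.symm]
      omega
  obtain ⟨v, hne⟩ := Fintype.exists_ne_of_one_lt_card (by omega) w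
  obtain ⟨u0, hu0⟩ : ∃ u, G.Adj w u := by
    obtain ⟨p⟩ := hG.isConnected w v
    cases p with
    | nil => exact absurd rfl hne
    | cons h q => exact ⟨_, h⟩
  have huniq : ∀ u1 ∈ G.neighborFinset w, ∀ u2 ∈ G.neighborFinset w, u1 = u2 := by
    intro u1 h1 u2 h2
    rw [mem_nbr] at h1 h2
    by_contra hne12
    obtain ⟨p1, hp1, hl1⟩ := exists_geodesic hG.isConnected x u1
    obtain ⟨p2, hp2, hl2⟩ := exists_geodesic hG.isConnected x u2
    have hd1 := hnb u1 h1
    have hd2 := hnb u2 h2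
    have hw1 : w ∉ p1.support := not_mem_of_geodesic hl1 (by omega)
    have hw2 : w ∉ p2.support := not_mem_of_geodesic hl2 (by omega)
    have hP1 : (p1.concat h1.symm).IsPath := by
      rw [← SimpleGraph.Walk.isPath_reverse_iff, SimpleGraph.Walk.reverse_concat]
      exact hp1.reverse.cons (by simpa using hw1)
    have hP2 : (p2.concat h2.symm).IsPath := by
      rw [← SimpleGraph.Walk.isPath_reverse_iff, SimpleGraph.Walk.reverse_concat]
      exact hp2.reverse.cons (by simpa using hw2)
    have hPeq : p1.concat h1.symm = p2.concat h2.symm :=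
      congrArg Subtype.val (hG.IsAcyclic.path_unique ⟨_, hP1⟩ ⟨_, hP2⟩)
    have hgv := congrArg (fun r : G.Walk x w => r.reverse.getVert 1) hPeq
    simp only [SimpleGraph.Walk.reverse_concat, SimpleGraph.Walk.getVert_cons _ _ one_ne_zero,
      Nat.sub_self, SimpleGraph.Walk.getVert_zero] at hgv
    exact hne12 hgv
  have hdeg : G.degree w = 1 := by
    rw [← SimpleGraph.card_neighborFinset_eq_degree]
    refine le_antisymm (Finset.card_le_one.mpr fun a ha b hb => huniq a ha b hb) ?_
    rw [Nat.succ_le_iff, Finset.card_pos]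
    exact ⟨u0, mem_nbr.mpr hu0⟩
  exact ⟨w, hwB, mem_bdry_iff.mpr hdeg, hwx⟩

lemma sum_lap_branch (hG : G.IsTree) {y z : V} (hadj : G.Adj y z) (f : V → ℝ) :
    ∑ w ∈ branchFinset G y z, lap G f w = f y - f z := by
  have hyB : y ∈ branchFinset G y z := mem_branchFinset.mpr (SimpleGraph.Reachable.refl y)
  have hzB : z ∉ branchFinset G y z := fun h => tree_bridge hG hadj (mem_branchFinset.mp h)
  have hsplit : ∀ w, lap G f w =
      (∑ u ∈ branchFinset G y z, if u ∈ G.neighborFinset w then f w - f u else 0)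
      + ∑ u ∈ G.neighborFinset w \ branchFinset G y z, (f w - f u) := by
    intro w
    rw [Finset.sum_ite_mem, Finset.inter_comm]
    exact (Finset.sum_inter_add_sum_sdiff _ _ _).symm
  rw [Finset.sum_congr rfl (fun w _ => hsplit w), Finset.sum_add_distrib]
  have hS1 : (∑ w ∈ branchFinset G y z, ∑ u ∈ branchFinset G y z,
      if u ∈ G.neighborFinset w then f w - f u else 0) = 0 := by
    have key : ∀ w u : V, (if u ∈ G.neighborFinset w then f w - f u else 0)
        = -(if w ∈ G.neighborFinset u then f u - f w else 0) := by
      intro w u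
      by_cases h : G.Adj w u
      · rw [if_pos (mem_nbr.mpr h),
          if_pos (mem_nbr.mpr h.symm)]
        ring
      · rw [if_neg (fun hc => h (mem_nbr.mp hc)),
          if_neg (fun hc => h (mem_nbr.mp hc).symm)]
        ring
    have hA : (∑ w ∈ branchFinset G y z, ∑ u ∈ branchFinset G y z,
        if u ∈ G.neighborFinset w then f w - f u else 0)
        = -(∑ w ∈ branchFinset G y z, ∑ u ∈ branchFinset G y z,
        if u ∈ G.neighborFinset w then f w - f u else 0) := by
      conv_lhs => rw [Finset.sum_comm]
      rw [← Finset.sum_neg_distrib]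
      refine Finset.sum_congr rfl fun a _ => ?_
      rw [← Finset.sum_neg_distrib]
      exact Finset.sum_congr rfl fun b _ => key b a
    linarith
  have hS2 : (∑ w ∈ branchFinset G y z,
      ∑ u ∈ G.neighborFinset w \ branchFinset G y z, (f w - f u)) = f y - f z := by
    have hinner : ∀ w ∈ branchFinset G y z,
        (∑ u ∈ G.neighborFinset w \ branchFinset G y z, (f w - f u))
          = if w = y then f y - f z else 0 := by
      intro w hw
      have hwB := mem_branchFinset.mp hw
      by_cases hwy : w = y
      · subst hwy
        have hset : G.neighborFinset w \ branchFinset G w z = {z} := by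
          ext u
          rw [Finset.mem_sdiff, mem_nbr, Finset.mem_singleton]
          constructor
          · rintro ⟨h1, h2⟩
            exact (branch_crossing hG hadj hwB
              (fun hc => h2 (mem_branchFinset.mpr hc)) h1).2
          · rintro rfl
            exact ⟨hadj, hzB⟩
        rw [hset, Finset.sum_singleton, if_pos rfl]
      · rw [if_neg hwy]
        have hset : G.neighborFinset w \ branchFinset G y z = ∅ := by
          rw [Finset.eq_empty_iff_forall_notMem]
          intro u hu
          rw [Finset.mem_sdiff, mem_nbr] at hu
          exact hwy (branch_crossing hG hadj hwB
            (fun hc => hu.2 (mem_branchFinset.mpr hc)) hu.1).1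
        rw [hset, Finset.sum_empty]
    rw [Finset.sum_congr rfl hinner, Finset.sum_ite_eq' (branchFinset G y z) y, if_pos hyB]
  rw [hS1, hS2, zero_add]

end Aux

/-- For `lam > 0` and `x ∈ δG`, a function `f` is a `lam`-flow to `x`
increasing along edges pointing away from `x` if and only if it is a `lam`-flow to `x`
which is positive on `δG ∖ {x}`. -/
theorem flow_positive_iff (G : SimpleGraph V) (hG : G.IsTree) (hcard : 2 ≤ Fintype.card V)
    (x : V) (hx : x ∈ bdry G) (lam : ℝ) (hlam : 0 < lam) (f : V → ℝ) :
    (IsFlow G lam x f ∧ ∀ y z : V, G.Adj y z → G.dist x z < G.dist x y → f z < f y) ↔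
    (IsFlow G lam x f ∧ ∀ z ∈ bdry G, z ≠ x → 0 < f z) := by
  constructor
  · rintro ⟨hf, hmono⟩
    refine ⟨hf, fun w hw hwx => ?_⟩
    obtain ⟨a, ha⟩ := Finset.card_eq_one.mp (mem_bdry_iff.mp hw)
    have haAdj : G.Adj w a := mem_nbr.mp
      (by rw [ha]; exact Finset.mem_singleton_self a)
    obtain ⟨p, hp, hpl⟩ := exists_geodesic hG.isConnected x w
    have hposd : 0 < G.dist x w :=
      hG.isConnected.pos_dist_of_ne (fun h => hwx h.symm)
    have hnn : ¬ p.reverse.Nil := by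
      rw [SimpleGraph.Walk.nil_iff_length_eq, SimpleGraph.Walk.length_reverse]
      omega
    obtain ⟨u, hadjwu, q, hq⟩ := SimpleGraph.Walk.not_nil_iff.mp hnn
    have hua : u = a := by
      have : u ∈ G.neighborFinset w := mem_nbr.mpr hadjwu
      rw [ha, Finset.mem_singleton] at this
      exact this
    subst hua
    have hql : q.length = G.dist x w - 1 := by
      have := congrArg SimpleGraph.Walk.length hq
      rw [SimpleGraph.Walk.length_reverse, SimpleGraph.Walk.length_cons] at this
      omega
    have hda : G.dist x u < G.dist x w := by
      have h1 : G.dist x u ≤ q.reverse.length := SimpleGraph.dist_le _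
      rw [SimpleGraph.Walk.length_reverse, hql] at h1
      omega
    have hfa : f u < f w := hmono w u hadjwu hda
    have hlap : lap G f w = f w - f u := by
      unfold lap
      rw [ha, Finset.sum_singleton]
    have hflow := hf.2.2 w hw hwx
    rw [hlap] at hflow
    nlinarith
  · rintro ⟨hf, hpos⟩
    refine ⟨hf, fun y z hadj hd => ?_⟩
    have hsum := sum_lap_branch hG hadj f
    have hxB : x ∉ branchFinset G y z := fun h =>
      x_not_in_branch hG hadj hd (mem_branchFinset.mp h)
    rw [← Finset.sum_filter_add_sum_filter_not (branchFinset G y z)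
      (fun w => w ∈ bdry G)] at hsum
    have hint : ∑ w ∈ (branchFinset G y z).filter (fun w => w ∉ bdry G),
        lap G f w = 0 := by
      apply Finset.sum_eq_zero
      intro w hw
      rw [Finset.mem_filter] at hw
      exact hf.2.1 w hw.2 (fun h => hxB (h ▸ hw.1))
    have hbd : ∀ w ∈ (branchFinset G y z).filter (fun w => w ∈ bdry G),
        lap G f w = lam * f w := by
      intro w hw
      rw [Finset.mem_filter] at hw
      exact hf.2.2 w hw.2 (fun h => hxB (h ▸ hw.1))
    rw [Finset.sum_congr rfl hbd, hint, add_zero] at hsum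
    have hposum : 0 < ∑ w ∈ (branchFinset G y z).filter (fun w => w ∈ bdry G),
        lam * f w := by
      apply Finset.sum_pos
      · intro w hw
        rw [Finset.mem_filter] at hw
        exact mul_pos hlam (hpos w hw.2 (fun h => hxB (h ▸ hw.1)))
      · obtain ⟨w, h1, h2, _⟩ := exists_boundary_in_branch hG hcard hadj hd
        exact ⟨w, Finset.mem_filter.mpr ⟨h1, h2⟩⟩
    linarith
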